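/- arXiv:2405.13338 — 2 statements merged into one kernel-verified Lean document; each statement's English description precedes it below -/
import Mathlib

section
/- Let λ > 0 and T > 0, and define r(t) = (λ + 2t + λt²)/(1 + sin²t). Then for all t ∈ [0,T]: r(t) = (2t + λe^{−λt})/(1 + sin²t) + (λ/(1 + sin²t))·∫₀ᵗ (1 + sin²τ)·e^{−λ(t−τ)}·r(τ) dτ. -/
open MeasureTheory Set intervalIntegral

/-- `r(t) = (λ + 2t + λt²)/(1 + sin²t)` solves the second-kind Volterra
integral equation
`r(t) = (2t + λe^{−λt})/(1 + sin²t)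
  + (λ/(1 + sin²t))·∫₀ᵗ (1 + sin²τ) e^{−λ(t−τ)} r(τ) dτ` on `[0,T]`. -/
theorem volterra_nonlocal_example
    (lam T : ℝ) (hlam : 0 < lam) (hT : 0 < T) (r : ℝ → ℝ)
    (hr : r = fun t => (lam + 2 * t + lam * t ^ 2) / (1 + Real.sin t ^ 2)) :
    ∀ t ∈ Icc 0 T,
      r t = (2 * t + lam * Real.exp (-lam * t)) / (1 + Real.sin t ^ 2) +
        (lam / (1 + Real.sin t ^ 2)) *
          ∫ τ in (0:ℝ)..t,
            (1 + Real.sin τ ^ 2) * Real.exp (-lam * (t - τ)) * r τ := by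
  intro t ht
  have hden : (0:ℝ) < 1 + Real.sin t ^ 2 := by positivity
  have hint : (∫ τ in (0:ℝ)..t,
      (1 + Real.sin τ ^ 2) * Real.exp (-lam * (t - τ)) * r τ)
      = (1 + t ^ 2) - Real.exp (-lam * t) := by
    have heq : ∀ τ : ℝ, (1 + Real.sin τ ^ 2) * Real.exp (-lam * (t - τ)) * r τ
        = (lam + 2 * τ + lam * τ ^ 2) * Real.exp (-lam * (t - τ)) := by
      intro τ
      have hdτ : (1 + Real.sin τ ^ 2) ≠ 0 := by positivity
      rw [hr]
      field_simp
    have hderiv : ∀ τ ∈ Set.uIcc (0:ℝ) t, HasDerivAt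
        (fun τ => (1 + τ ^ 2) * Real.exp (-lam * (t - τ)))
        ((lam + 2 * τ + lam * τ ^ 2) * Real.exp (-lam * (t - τ))) τ := by
      intro τ _
      have h1 : HasDerivAt (fun τ : ℝ => 1 + τ ^ 2) (2 * τ) τ := by
        simpa using (hasDerivAt_pow 2 τ).const_add 1
      have h2 : HasDerivAt (fun τ : ℝ => Real.exp (-lam * (t - τ)))
          (lam * Real.exp (-lam * (t - τ))) τ := by
        have h3 : HasDerivAt (fun τ : ℝ => -lam * (t - τ)) lam τ := by
          simpa using (((hasDerivAt_id τ).const_sub t).const_mul (-lam))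
        simpa [mul_comm] using h3.exp
      have := h1.mul h2
      exact this.congr_deriv (by ring)
    have hcont : IntervalIntegrable
        (fun τ => (lam + 2 * τ + lam * τ ^ 2) * Real.exp (-lam * (t - τ)))
        volume 0 t := by
      apply Continuous.intervalIntegrable
      continuity
    rw [intervalIntegral.integral_congr (fun τ _ => heq τ),
      intervalIntegral.integral_eq_sub_of_hasDerivAt hderiv hcont]
    simp
  rw [hint, hr]
  have hd : (1 + Real.sin t ^ 2) ≠ 0 := ne_of_gt hden
  field_simp
  ring
end

section
/- Let T > 0, let 0 < t₀ ≤ T, let λ₁ > 0, and let (λ_k)_{k≥1} be reals with λ_k ≥ λ₁ for all k. Let p : [0,T] → ℝ be continuous and set M = max{ exp(∫_τᵗ p(y)dy) : 0 ≤ τ ≤ t ≤ T }. Let (φ_k)_{k≥1} be a square-summable real sequence and let f_k : [0,T] → ℝ (k ≥ 1) be continuous functions with Σ_{k=1}^∞ ∫₀ᵀ f_k(τ)² dτ < ∞. Define u_k(t) = φ_k·exp(−λ_k t + ∫₀ᵗ p(τ)dτ) + ∫₀ᵗ f_k(τ)·exp(−λ_k(t−τ) + ∫_τᵗ p(y)dy)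 dτ. Then for every t with t₀ ≤ t ≤ T: Σ_{k=1}^∞ λ_k·u_k(t)² ≤ (2M²/(t₀² e² λ₁))·Σ_{k=1}^∞ φ_k² + 2M²·Σ_{k=1}^∞ ∫₀ᵀ f_k(τ)² dτ. -/
open MeasureTheory Set intervalIntegral

private lemma cs_interval {a b : ℝ} (hab : a ≤ b) {f g : ℝ → ℝ}
    (hf : ContinuousOn f (Icc a b)) (hg : ContinuousOn g (Icc a b)) :
    (∫ x in a..b, f x * g x) ^ 2 ≤ (∫ x in a..b, f x ^ 2) * (∫ x in a..b, g x ^ 2) := by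
  have hU : uIcc a b = Icc a b := uIcc_of_le hab
  have hif : IntervalIntegrable (fun x => f x ^ 2) volume a b := by
    apply ContinuousOn.intervalIntegrable; rw [hU]; exact hf.pow 2
  have hig : IntervalIntegrable (fun x => g x ^ 2) volume a b := by
    apply ContinuousOn.intervalIntegrable; rw [hU]; exact hg.pow 2
  have hifg : IntervalIntegrable (fun x => f x * g x) volume a b := by
    apply ContinuousOn.intervalIntegrable; rw [hU]; exact hf.mul hg
  set A := ∫ x in a..b, f x ^ 2 with hA
  set B := ∫ x in a..b, f x * g x with hB
  set C := ∫ x in a..b, g x ^ 2 with hC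
  have key : ∀ c : ℝ, 0 ≤ A * (c * c) + (-2 * B) * c + C := by
    intro c
    have h0 : 0 ≤ ∫ x in a..b, (c * f x - g x) ^ 2 :=
      intervalIntegral.integral_nonneg hab (fun x _ => sq_nonneg _)
    have hexp : (∫ x in a..b, (c * f x - g x) ^ 2)
        = (c * c) * A - 2 * c * B + C := by
      have h1 : (∫ x in a..b, (c * f x - g x) ^ 2)
          = ∫ x in a..b, ((c * c) * f x ^ 2 - 2 * c * (f x * g x) + g x ^ 2) := by
        congr 1; ext x; ring
      rw [h1, intervalIntegral.integral_add ((hif.const_mul _).sub (hifg.const_mul _)) hig,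
        intervalIntegral.integral_sub (hif.const_mul _) (hifg.const_mul _),
        intervalIntegral.integral_const_mul, intervalIntegral.integral_const_mul]
    linarith [hexp ▸ h0]
  have hd := discrim_le_zero key
  rw [discrim] at hd
  nlinarith [hd]

private lemma decay_bound {lam lam₁ t t₀ : ℝ} (hlam₁ : 0 < lam₁) (hlam : lam₁ ≤ lam)
    (ht₀ : 0 < t₀) (ht : t₀ ≤ t) :
    lam * (Real.exp (-lam * t)) ^ 2 ≤ 1 / (t₀ ^ 2 * Real.exp 1 ^ 2 * lam₁) := by
  have hlam0 : 0 < lam := lt_of_lt_of_le hlam₁ hlam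
  have ht0 : 0 < t := lt_of_lt_of_le ht₀ ht
  have he1 : (0:ℝ) < Real.exp 1 := Real.exp_pos _
  set ex := Real.exp (-lam * t) with hex
  have hexpos : 0 < ex := Real.exp_pos _
  have h1 : lam * t * ex ≤ Real.exp (-1 : ℝ) := by
    have ha := Real.add_one_le_exp (lam * t - 1)
    have he : Real.exp (lam * t - 1) = Real.exp (lam*t) * Real.exp (-1:ℝ) := by
      rw [← Real.exp_add]; ring_nf
    rw [he] at ha
    have hprod : Real.exp (lam*t) * ex = 1 := by
      rw [hex, ← Real.exp_add]; ring_nf; exact Real.exp_zero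
    nlinarith [ha, hexpos, hprod, Real.exp_pos (-1:ℝ)]
  have hEe : Real.exp (-1:ℝ) * Real.exp 1 = 1 := by rw [← Real.exp_add]; simp
  have key : lam * ex * (t * Real.exp 1) ≤ 1 := by
    calc lam * ex * (t * Real.exp 1) = (lam * t * ex) * Real.exp 1 := by ring
      _ ≤ Real.exp (-1:ℝ) * Real.exp 1 := by nlinarith [h1, he1]
      _ = 1 := hEe
  have keysq : (lam * ex * (t * Real.exp 1)) ^ 2 ≤ 1 := by
    nlinarith [key, mul_pos (mul_pos hlam0 hexpos) (mul_pos ht0 he1)]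
  rw [le_div_iff₀ (by positivity)]
  have m1 : lam * ex ^ 2 * (t₀ ^ 2 * Real.exp 1 ^ 2 * lam₁) ≤
      lam * ex ^ 2 * (t ^ 2 * Real.exp 1 ^ 2 * lam) := by gcongr
  calc lam * ex ^ 2 * (t₀ ^ 2 * Real.exp 1 ^ 2 * lam₁)
      ≤ lam * ex ^ 2 * (t ^ 2 * Real.exp 1 ^ 2 * lam) := m1
    _ = (lam * ex * (t * Real.exp 1)) ^ 2 := by ring
    _ ≤ 1 := keysq

private lemma exp_int_bound {lam t : ℝ} (hlam : 0 < lam) :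
    ∫ τ in (0:ℝ)..t, (Real.exp (-lam * (t - τ))) ^ 2 ≤ 1 / (2 * lam) := by
  have hcong : ∀ τ : ℝ, (Real.exp (-lam * (t - τ))) ^ 2 = Real.exp (2*lam*τ - 2*lam*t) := by
    intro τ; rw [← Real.exp_nat_mul]; ring_nf
  have hderiv : ∀ τ ∈ uIcc (0:ℝ) t, HasDerivAt (fun τ => Real.exp (2*lam*τ - 2*lam*t) / (2*lam))
      (Real.exp (2*lam*τ - 2*lam*t)) τ := by
    intro τ _
    have h1 : HasDerivAt (fun τ : ℝ => 2*lam*τ - 2*lam*t) (2*lam) τ := by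
      simpa using ((hasDerivAt_id τ).const_mul (2*lam)).sub_const (2*lam*t)
    have h2 := (h1.exp).div_const (2*lam)
    have hne : (2*lam) ≠ 0 := by positivity
    convert h2 using 1
    case e'_9 => exact (mul_div_cancel_right₀ _ hne).symm
    all_goals rfl
  have hint : IntervalIntegrable (fun τ => Real.exp (2*lam*τ - 2*lam*t)) volume 0 t :=
    (Continuous.intervalIntegrable (by continuity) 0 t)
  have hval := intervalIntegral.integral_eq_sub_of_hasDerivAt hderiv hint
  calc ∫ τ in (0:ℝ)..t, (Real.exp (-lam * (t - τ))) ^ 2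
      = ∫ τ in (0:ℝ)..t, Real.exp (2*lam*τ - 2*lam*t) := by simp_rw [hcong]
    _ = Real.exp (2*lam*t - 2*lam*t) / (2*lam) - Real.exp (2*lam*0 - 2*lam*t) / (2*lam) := hval
    _ ≤ 1 / (2*lam) := by
        have h1 : Real.exp (2*lam*t - 2*lam*t) = 1 := by simp
        rw [h1]
        have h2 : 0 < 2*lam := by positivity
        have := div_pos (Real.exp_pos (2*lam*0 - 2*lam*t)) h2
        linarith

set_option maxHeartbeats 1000000 in
/-- Weighted (`ℍ₀ˢ`-norm) bound for the eigenfunction coefficients of the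
series solution of `∂_t u + (−Δ)^s u = p(t)u + f`: for `t ∈ [t₀,T]`,
`Σ_k λ_k u_k(t)² ≤ (2M²/(t₀²e²λ₁)) Σ_k φ_k² + 2M² Σ_k ∫₀ᵀ f_k²`. -/
theorem series_solution_Hs_bound
    (T t₀ lam₁ : ℝ) (hT : 0 < T) (ht₀ : 0 < t₀) (ht₀T : t₀ ≤ T)
    (hlam₁ : 0 < lam₁)
    (lam : ℕ → ℝ) (hlam : ∀ k, lam₁ ≤ lam k)
    (p : ℝ → ℝ) (hp : ContinuousOn p (Icc 0 T))
    (M : ℝ)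
    (hM : ∀ τ t : ℝ, 0 ≤ τ → τ ≤ t → t ≤ T →
      Real.exp (∫ y in τ..t, p y) ≤ M)
    (φ : ℕ → ℝ) (hφ : Summable (fun k => (φ k) ^ 2))
    (f : ℕ → ℝ → ℝ) (hf : ∀ k, ContinuousOn (f k) (Icc 0 T))
    (hF : Summable (fun k => ∫ τ in (0:ℝ)..T, (f k τ) ^ 2))
    (u : ℕ → ℝ → ℝ)
    (hu : u = fun k t =>
      φ k * Real.exp (-lam k * t + ∫ τ in (0:ℝ)..t, p τ) +
      ∫ τ in (0:ℝ)..t, f k τ * Real.exp (-lam k * (t - τ) + ∫ y in τ..t, p y)) :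
    ∀ t, t₀ ≤ t → t ≤ T →
      Summable (fun k => lam k * (u k t) ^ 2) ∧
      ∑' k, lam k * (u k t) ^ 2 ≤
        (2 * M ^ 2 / (t₀ ^ 2 * Real.exp 1 ^ 2 * lam₁)) * ∑' k, (φ k) ^ 2 +
        2 * M ^ 2 * ∑' k, ∫ τ in (0:ℝ)..T, (f k τ) ^ 2 := by
  subst hu
  intro t htt₀ htT
  have ht0 : (0:ℝ) < t := lt_of_lt_of_le ht₀ htt₀
  have ht0' : (0:ℝ) ≤ t := le_of_lt ht0
  have hM1 : (1:ℝ) ≤ M := by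
    have := hM 0 0 le_rfl le_rfl (le_of_lt hT)
    simpa using this
  have hMpos : (0:ℝ) < M := lt_of_lt_of_le one_pos hM1
  have hIccsub : Icc (0:ℝ) t ⊆ Icc (0:ℝ) T := Icc_subset_Icc le_rfl htT
  have hIccsub2 : Icc t T ⊆ Icc (0:ℝ) T := Icc_subset_Icc ht0' le_rfl
  have hpt : ContinuousOn p (Icc 0 t) := hp.mono hIccsub
  have hU : uIcc (0:ℝ) t = Icc 0 t := uIcc_of_le ht0'
  have hQ : ContinuousOn (fun τ => ∫ y in τ..t, p y) (Icc 0 t) := by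
    have h := intervalIntegral.continuousOn_primitive_interval_left
      (f := p) (μ := volume) (a := (0:ℝ)) (b := t) (by rw [hU]; exact hpt.integrableOn_Icc)
    rwa [hU] at h
  set D := t₀ ^ 2 * Real.exp 1 ^ 2 * lam₁ with hD
  have hDpos : 0 < D := by positivity
  set c1 := 2 * M ^ 2 / D with hc1
  have hc1pos : 0 ≤ c1 := by positivity
  set G := fun k => ∫ τ in (0:ℝ)..T, (f k τ) ^ 2 with hG
  have hGnn : ∀ k, 0 ≤ G k := fun k =>
    intervalIntegral.integral_nonneg (le_of_lt hT) (fun x _ => sq_nonneg _)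
  -- per-term bound
  have key : ∀ k, lam k *
      ((φ k * Real.exp (-lam k * t + ∫ τ in (0:ℝ)..t, p τ) +
        ∫ τ in (0:ℝ)..t, f k τ * Real.exp (-lam k * (t - τ) + ∫ y in τ..t, p y))) ^ 2
      ≤ c1 * (φ k) ^ 2 + 2 * M ^ 2 * G k := by
    intro k
    have hlamk : 0 < lam k := lt_of_lt_of_le hlam₁ (hlam k)
    set a := φ k * Real.exp (-lam k * t + ∫ τ in (0:ℝ)..t, p τ) with ha
    set h := fun τ => Real.exp (-lam k * (t - τ) + ∫ y in τ..t, p y) with hh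
    set b := ∫ τ in (0:ℝ)..t, f k τ * h τ with hb
    have hhcont : ContinuousOn h (Icc 0 t) :=
      Real.continuous_exp.comp_continuousOn
        (((continuous_const.mul (continuous_const.sub continuous_id)).continuousOn).add hQ)
    have hfkt : ContinuousOn (f k) (Icc 0 t) := (hf k).mono hIccsub
    -- Cauchy–Schwarz
    have hcs := cs_interval ht0' hfkt hhcont
    -- bound on ∫ h²
    have hint1 : IntervalIntegrable (fun τ => h τ ^ 2) volume 0 t := by
      apply ContinuousOn.intervalIntegrable; rw [hU]; exact hhcont.pow 2
    have hint2 : IntervalIntegrable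
        (fun τ => M ^ 2 * (Real.exp (-lam k * (t - τ))) ^ 2) volume 0 t :=
      Continuous.intervalIntegrable (by continuity) 0 t
    have hptw : ∀ τ ∈ Icc (0:ℝ) t, h τ ^ 2 ≤ M ^ 2 * (Real.exp (-lam k * (t - τ))) ^ 2 := by
      intro τ hτ
      have hsplit : h τ = Real.exp (-lam k * (t - τ)) * Real.exp (∫ y in τ..t, p y) := by
        rw [hh, ← Real.exp_add]
      have hle : Real.exp (∫ y in τ..t, p y) ≤ M := hM τ t hτ.1 hτ.2 htT
      have h1 : 0 < Real.exp (-lam k * (t - τ)) := Real.exp_pos _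
      have h2 : 0 < Real.exp (∫ y in τ..t, p y) := Real.exp_pos _
      rw [hsplit, mul_pow]
      have h3 : (Real.exp (∫ y in τ..t, p y)) ^ 2 ≤ M ^ 2 := by nlinarith [h2, hle]
      calc (Real.exp (-lam k * (t - τ))) ^ 2 * (Real.exp (∫ y in τ..t, p y)) ^ 2
          ≤ (Real.exp (-lam k * (t - τ))) ^ 2 * M ^ 2 :=
            mul_le_mul_of_nonneg_left h3 (sq_nonneg _)
        _ = M ^ 2 * (Real.exp (-lam k * (t - τ))) ^ 2 := by ring
    have hmono := intervalIntegral.integral_mono_on ht0' hint1 hint2 hptw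
    have hconstmul : (∫ τ in (0:ℝ)..t, M ^ 2 * (Real.exp (-lam k * (t - τ))) ^ 2)
        = M ^ 2 * ∫ τ in (0:ℝ)..t, (Real.exp (-lam k * (t - τ))) ^ 2 :=
      intervalIntegral.integral_const_mul _ _
    have hH : (∫ τ in (0:ℝ)..t, h τ ^ 2) ≤ M ^ 2 * (1 / (2 * lam k)) := by
      calc (∫ τ in (0:ℝ)..t, h τ ^ 2)
          ≤ M ^ 2 * ∫ τ in (0:ℝ)..t, (Real.exp (-lam k * (t - τ))) ^ 2 := by
            rw [← hconstmul]; exact hmono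
        _ ≤ M ^ 2 * (1 / (2 * lam k)) := by
            have := exp_int_bound (t := t) hlamk
            nlinarith [this, sq_nonneg M]
    -- ∫₀ᵗ f² ≤ G k
    have hi1 : IntervalIntegrable (fun τ => (f k τ) ^ 2) volume 0 t := by
      apply ContinuousOn.intervalIntegrable; rw [hU]; exact hfkt.pow 2
    have hi2 : IntervalIntegrable (fun τ => (f k τ) ^ 2) volume t T := by
      apply ContinuousOn.intervalIntegrable
      rw [uIcc_of_le htT]; exact ((hf k).mono hIccsub2).pow 2
    have hfle : (∫ τ in (0:ℝ)..t, (f k τ) ^ 2) ≤ G k := by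
      have hsplit := intervalIntegral.integral_add_adjacent_intervals hi1 hi2
      have hnn : 0 ≤ ∫ τ in t..T, (f k τ) ^ 2 :=
        intervalIntegral.integral_nonneg htT (fun x _ => sq_nonneg _)
      show (∫ τ in (0:ℝ)..t, (f k τ) ^ 2) ≤ ∫ τ in (0:ℝ)..T, (f k τ) ^ 2
      linarith [hsplit, hnn]
    have hf2nn : 0 ≤ ∫ τ in (0:ℝ)..t, (f k τ) ^ 2 :=
      intervalIntegral.integral_nonneg ht0' (fun x _ => sq_nonneg _)
    have hh2nn : 0 ≤ ∫ τ in (0:ℝ)..t, h τ ^ 2 :=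
      intervalIntegral.integral_nonneg ht0' (fun x _ => sq_nonneg _)
    -- bound on λ b²
    have hbB : 2 * lam k * b ^ 2 ≤ 2 * M ^ 2 * G k := by
      have s1 : b ^ 2 ≤ (∫ τ in (0:ℝ)..t, (f k τ) ^ 2) * (M ^ 2 * (1 / (2 * lam k))) := by
        calc b ^ 2 ≤ (∫ τ in (0:ℝ)..t, (f k τ) ^ 2) * (∫ τ in (0:ℝ)..t, h τ ^ 2) := hcs
          _ ≤ _ := by
            exact mul_le_mul_of_nonneg_left hH hf2nn
      have s2 : 2 * lam k * ((∫ τ in (0:ℝ)..t, (f k τ) ^ 2) * (M ^ 2 * (1 / (2 * lam k))))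
          = M ^ 2 * (∫ τ in (0:ℝ)..t, (f k τ) ^ 2) := by
        field_simp
      calc 2 * lam k * b ^ 2
          ≤ 2 * lam k * ((∫ τ in (0:ℝ)..t, (f k τ) ^ 2) * (M ^ 2 * (1 / (2 * lam k)))) := by
            exact mul_le_mul_of_nonneg_left s1 (by positivity)
        _ = M ^ 2 * (∫ τ in (0:ℝ)..t, (f k τ) ^ 2) := s2
        _ ≤ M ^ 2 * G k := mul_le_mul_of_nonneg_left hfle (by positivity)
        _ ≤ 2 * M ^ 2 * G k := by nlinarith [hGnn k, sq_nonneg M]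
    -- bound on λ a²
    have haA : 2 * lam k * a ^ 2 ≤ c1 * (φ k) ^ 2 := by
      have hEs : Real.exp (-lam k * t + ∫ τ in (0:ℝ)..t, p τ)
          = Real.exp (-lam k * t) * Real.exp (∫ τ in (0:ℝ)..t, p τ) := by
        rw [← Real.exp_add]
      have hle : Real.exp (∫ τ in (0:ℝ)..t, p τ) ≤ M := hM 0 t le_rfl ht0' htT
      have h1 : 0 < Real.exp (-lam k * t) := Real.exp_pos _
      have h2 : 0 < Real.exp (∫ τ in (0:ℝ)..t, p τ) := Real.exp_pos _
      have hE2 : (Real.exp (-lam k * t + ∫ τ in (0:ℝ)..t, p τ)) ^ 2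
          ≤ (Real.exp (-lam k * t)) ^ 2 * M ^ 2 := by
        rw [hEs, mul_pow]
        have h3 : (Real.exp (∫ τ in (0:ℝ)..t, p τ)) ^ 2 ≤ M ^ 2 := by nlinarith [h2, hle]
        exact mul_le_mul_of_nonneg_left h3 (sq_nonneg _)
      have hdec := decay_bound hlam₁ (hlam k) ht₀ htt₀
      have step : lam k * a ^ 2 ≤ (φ k) ^ 2 * (M ^ 2 * (1 / D)) := by
        have e1 : lam k * a ^ 2 = (φ k) ^ 2 *
            (lam k * (Real.exp (-lam k * t + ∫ τ in (0:ℝ)..t, p τ)) ^ 2) := by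
          rw [ha]; ring
        rw [e1]
        apply mul_le_mul_of_nonneg_left _ (sq_nonneg _)
        calc lam k * (Real.exp (-lam k * t + ∫ τ in (0:ℝ)..t, p τ)) ^ 2
            ≤ lam k * ((Real.exp (-lam k * t)) ^ 2 * M ^ 2) :=
              mul_le_mul_of_nonneg_left hE2 hlamk.le
          _ = M ^ 2 * (lam k * (Real.exp (-lam k * t)) ^ 2) := by ring
          _ ≤ M ^ 2 * (1 / D) :=
              mul_le_mul_of_nonneg_left hdec (by positivity)
      have e2 : c1 * (φ k) ^ 2 = 2 * ((φ k) ^ 2 * (M ^ 2 * (1 / D))) := by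
        rw [hc1]; ring
      rw [e2]; linarith [step]
    -- combine
    have hcomb : lam k * (a + b) ^ 2 ≤ 2 * lam k * a ^ 2 + 2 * lam k * b ^ 2 := by
      nlinarith [sq_nonneg (a - b), hlamk.le, mul_nonneg hlamk.le (sq_nonneg (a - b))]
    linarith [hcomb, haA, hbB]
  -- summability and tsum bound
  have hbound_sum : Summable (fun k => c1 * (φ k) ^ 2 + 2 * M ^ 2 * G k) :=
    (hφ.mul_left c1).add (hF.mul_left (2 * M ^ 2))
  have hnn : ∀ k, 0 ≤ lam k *
      ((φ k * Real.exp (-lam k * t + ∫ τ in (0:ℝ)..t, p τ) +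
        ∫ τ in (0:ℝ)..t, f k τ * Real.exp (-lam k * (t - τ) + ∫ y in τ..t, p y))) ^ 2 := by
    intro k
    have hlamk : 0 < lam k := lt_of_lt_of_le hlam₁ (hlam k)
    positivity
  have hsum : Summable (fun k => lam k *
      ((φ k * Real.exp (-lam k * t + ∫ τ in (0:ℝ)..t, p τ) +
        ∫ τ in (0:ℝ)..t, f k τ * Real.exp (-lam k * (t - τ) + ∫ y in τ..t, p y))) ^ 2) :=
    Summable.of_nonneg_of_le hnn key hbound_sum
  refine ⟨hsum, ?_⟩
  calc ∑' k, lam k *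
      ((φ k * Real.exp (-lam k * t + ∫ τ in (0:ℝ)..t, p τ) +
        ∫ τ in (0:ℝ)..t, f k τ * Real.exp (-lam k * (t - τ) + ∫ y in τ..t, p y))) ^ 2
      ≤ ∑' k, (c1 * (φ k) ^ 2 + 2 * M ^ 2 * G k) := Summable.tsum_le_tsum key hsum hbound_sum
    _ = c1 * ∑' k, (φ k) ^ 2 + 2 * M ^ 2 * ∑' k, G k := by
        rw [Summable.tsum_add (hφ.mul_left c1) (hF.mul_left (2 * M ^ 2)), tsum_mul_left, tsum_mul_left]
end
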